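/- For every n ≥ 3 and every λ_1 with 2 ≤ λ_1 ≤ n−1, one has |η_{(λ_1,1^{n−λ_1})}| < |η_{(λ_1+1,1^{n−λ_1−1})}|; equivalently, D_{λ_1} + (n−λ_1)·D_{λ_1−1} < D_{λ_1+1} + (n−λ_1−1)·D_{λ_1}. In other words, the absolute values of the hook eigenvalues strictly increase with the first part. -/

import Mathlib

/-- Derangement numbers: `D 0 = 1`, `D (m+1) = (m+1) * D m + (-1)^(m+1)`. -/
def derange : ℕ → ℤ
  | 0 => 1
  | n + 1 => (n + 1 : ℤ) * derange n + (-1) ^ (n + 1)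

/-- Subtract one from every part and discard the parts that become zero
(deleting the first column of the Ferrers diagram). -/
def strip (l : List ℕ) : List ℕ := (l.map (· - 1)).filter (fun x => 0 < x)

lemma strip_measure (l : List ℕ) : (strip l).sum + (strip l).length ≤ l.sum := by
  induction l with
  | nil => simp [strip]
  | cons x t ih =>
      simp only [strip, List.map_cons, List.filter_cons] at ih ⊢
      by_cases hx : 0 < x - 1 <;> simp [hx] <;> omega

/-- The eigenvalues of the derangement graph, defined by Renteln's recurrence:
`η ∅ = 1` and `η λ = (-1)^h (η (λ-ĥ) + (-1)^{λ₁} h η (λ-ĉ))`, where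
`h = λ₁ + r - 1` is the hook size, `λ-ĥ = strip (tail λ)` removes the hook,
and `λ-ĉ = strip λ` removes the first column. -/
def eta : List ℕ → ℤ
  | [] => 1
  | a :: t =>
      (-1) ^ (a + t.length) *
        (eta (strip t) + (-1) ^ a * ((a : ℤ) + t.length) * eta (strip (a :: t)))
  termination_by l => l.sum + l.length
  decreasing_by
  · have h1 := strip_measure t
    simp only [List.sum_cons, List.length_cons]
    omega
  · have h1 := strip_measure (a :: t)
    simp only [List.sum_cons, List.length_cons] at h1 ⊢
    omega


lemma strip_rep (k : ℕ) : strip (List.replicate k 1) = [] := by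
  simp [strip, List.filter_eq_nil_iff]
lemma strip_cons_rep (a k : ℕ) (ha : 2 ≤ a) : strip (a :: List.replicate k 1) = [a-1] := by
  simp [strip, List.filter_cons, List.filter_eq_nil_iff]
  omega
lemma eta_cons (a : ℕ) (t : List ℕ) : eta (a :: t) = (-1) ^ (a + t.length) *
        (eta (strip t) + (-1) ^ a * ((a : ℤ) + t.length) * eta (strip (a :: t))) := by
  rw [eta]


lemma eta_nil : eta [] = 1 := by rw [eta]

lemma neg_one_pow_bounds (k : ℕ) : (-1 : ℤ) ≤ (-1)^k ∧ (-1 : ℤ)^k ≤ 1 := by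
  rcases Nat.even_or_odd k with h | h
  · rw [h.neg_one_pow]; norm_num
  · rw [h.neg_one_pow]; norm_num

lemma derange_ge : ∀ m, 0 ≤ derange m ∧ (2 ≤ m → 1 ≤ derange m)
  | 0 => ⟨by decide, by omega⟩
  | 1 => ⟨le_refl 0, by omega⟩
  | (m+2) => by
      have ih := derange_ge (m+1)
      have hb := neg_one_pow_bounds (m+2)
      have key : 1 ≤ derange (m+2) := by
        show 1 ≤ (m + 2 : ℤ) * derange (m+1) + (-1)^(m+2)
        rcases Nat.eq_zero_or_pos m with rfl | hm
        · decide
        · have h1 : 1 ≤ derange (m+1) := ih.2 (by omega)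
          have : (3:ℤ) ≤ (m+2:ℤ) := by exact_mod_cast (by omega : 3 ≤ m + 2)
          nlinarith [hb.1]
      exact ⟨by omega, fun _ => key⟩

lemma eta_single : ∀ m, 1 ≤ m → eta [m] = derange m := by
  intro m
  induction m using Nat.strong_induction_on with
  | _ m ih =>
    intro hm
    rcases Nat.lt_or_ge m 2 with h | h
    · interval_cases m
      rw [eta_cons]
      norm_num [strip, derange]
    · have hs : strip [m] = [m-1] := strip_cons_rep m 0 h
      rw [eta_cons]
      rw [show ([] : List ℕ).length = 0 from rfl, hs]
      obtain ⟨k, rfl⟩ : ∃ k, m = k + 1 := ⟨m - 1, by omega⟩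
      rw [show k + 1 - 1 = k from rfl, ih k (by omega) (by omega)]
      simp only [strip, List.map_nil, List.filter_nil]
      show (-1)^(k+1+0) * (eta [] + (-1)^(k+1) * ((k+1 : ℤ) + (0:ℕ)) * derange k) = derange (k+1)
      rw [eta_nil, show derange (k+1) = (k+1:ℤ) * derange k + (-1)^(k+1) from rfl]
      push_cast
      ring_nf
      have h2 : ((-1:ℤ))^(k*2) = 1 := by rw [pow_mul', neg_one_sq, one_pow]
      rw [h2]; ring

/-- `l` is (the list of parts of) a partition of `n`: weakly decreasing,
all parts positive, summing to `n`. -/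
def IsPartition (n : ℕ) (l : List ℕ) : Prop :=
  l.Pairwise (· ≥ ·) ∧ (∀ x ∈ l, 0 < x) ∧ l.sum = n

/-- The hook partition `(a, 1^(n-a))` of `n`. -/
def hookP (n a : ℕ) : List ℕ := a :: List.replicate (n - a) 1


lemma neg_one_pow_sq (k : ℕ) : ((-1:ℤ))^k * ((-1:ℤ))^k = 1 := by
  rw [← pow_add, ← two_mul, pow_mul, neg_one_sq, one_pow]

lemma eta_hook (n a : ℕ) (ha : 2 ≤ a) (han : a ≤ n) :
    eta (hookP n a) = (-1)^(n+a) * (derange a + ((n-a:ℕ):ℤ) * derange (a-1)) := by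
  obtain ⟨b, rfl⟩ : ∃ b, a = b + 1 := ⟨a-1, by omega⟩
  rw [hookP, eta_cons, strip_rep, eta_nil, strip_cons_rep _ _ ha,
    show b + 1 - 1 = b from rfl, eta_single b (by omega), List.length_replicate,
    show b + 1 + (n - (b+1)) = n by omega]
  have hc : ((n - (b+1) : ℕ) : ℤ) = (n:ℤ) - (b+1) := by omega
  have hD : derange (b+1) = ((b:ℤ)+1) * derange b + (-1)^(b+1) := by
    rw [derange]
  rw [hc, hD, pow_add]
  have h2 := neg_one_pow_sq (b+1)
  push_cast
  linear_combination (-((-1:ℤ)^n)) * h2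

lemma main_ineq (n a : ℕ) (hn : 3 ≤ n) (ha : 2 ≤ a) (han : a ≤ n - 1) :
    derange a + ((n - a : ℕ) : ℤ) * derange (a - 1) <
      derange (a + 1) + ((n - a - 1 : ℕ) : ℤ) * derange a := by
  obtain ⟨b, rfl⟩ : ∃ b, a = b + 1 := ⟨a-1, by omega⟩
  have hb1 : 1 ≤ b := by omega
  have hc1 : ((n - (b+1) : ℕ) : ℤ) = (n:ℤ) - (b+1) := by omega
  have hc2 : ((n - (b+1) - 1 : ℕ) : ℤ) = (n:ℤ) - (b+2) := by omega
  have hD1 : derange (b+1) = ((b:ℤ)+1) * derange b + (-1)^(b+1) := by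
    rw [derange]
  have hD2 : derange (b+1+1) = ((b:ℤ)+2) * derange (b+1) + (-1)^(b+2) := by
    rw [derange]; push_cast; ring
  have hx : 0 ≤ derange b := (derange_ge b).1
  have hn3 : (3:ℤ) ≤ (n:ℤ) := by exact_mod_cast hn
  have hb' : (1:ℤ) ≤ (b:ℤ) := by exact_mod_cast hb1
  rw [show b + 1 - 1 = b from rfl, hc1, hc2, hD2, hD1]
  rcases Nat.even_or_odd (b+1) with hp | hp
  · have hs : ((-1:ℤ))^(b+1) = 1 := hp.neg_one_pow
    have hs2 : ((-1:ℤ))^(b+2) = -1 := by rw [pow_succ, hs]; ring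
    rw [hs, hs2]
    nlinarith [mul_nonneg (mul_nonneg (by linarith : (0:ℤ) ≤ n) (by linarith : (0:ℤ) ≤ (b:ℤ))) hx]
  · have hs : ((-1:ℤ))^(b+1) = -1 := hp.neg_one_pow
    have hs2 : ((-1:ℤ))^(b+2) = 1 := by rw [pow_succ, hs]; ring
    have hbe : 2 ≤ b := by rcases hp with ⟨c, hc⟩; omega
    have hx1 : 1 ≤ derange b := (derange_ge b).2 hbe
    have hb2 : (2:ℤ) ≤ (b:ℤ) := by exact_mod_cast hbe
    rw [hs, hs2]
    nlinarith [mul_le_mul hb2 hx1 zero_le_one (le_trans (by norm_num) hb2)]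

lemma abs_eta_hook (n a : ℕ) (ha : 2 ≤ a) (han : a ≤ n) :
    |eta (hookP n a)| = derange a + ((n-a:ℕ):ℤ) * derange (a-1) := by
  rw [eta_hook n a ha han, abs_mul, abs_pow, abs_neg, abs_one, one_pow, one_mul,
    abs_of_nonneg]
  exact add_nonneg (derange_ge a).1 (mul_nonneg (Nat.cast_nonneg _) (derange_ge _).1)


/-- For `n ≥ 3` and `2 ≤ a ≤ n-1`, `|η_{(a,1^{n-a})}| < |η_{(a+1,1^{n-a-1})}|`;
equivalently `D_a + (n-a) D_{a-1} < D_{a+1} + (n-a-1) D_a`. -/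
theorem eta_hook_abs_strict_mono (n a : ℕ) (hn : 3 ≤ n) (ha : 2 ≤ a) (han : a ≤ n - 1) :
    |eta (hookP n a)| < |eta (hookP n (a + 1))| ∧
    derange a + ((n - a : ℕ) : ℤ) * derange (a - 1) <
      derange (a + 1) + ((n - a - 1 : ℕ) : ℤ) * derange a := by
  have key := main_ineq n a hn ha han
  refine ⟨?_, key⟩
  rw [abs_eta_hook n a ha (by omega), abs_eta_hook n (a+1) (by omega) (by omega),
    show a + 1 - 1 = a from rfl, show n - (a+1) = n - a - 1 by omega]
  exact key
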